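/- Let A be a Banach algebra with a two-sided contractive approximate identity (a_k)_{k∈K}, and let C be a C*-algebra with contractive approximate identity (c_i)_{i∈I}, both acting on the same space with C·A ⊆ A and A·C ⊆ A. Then for every a in the closed linear span A₀ of {c a c' : c, c' ∈ C, a ∈ A}, the net x_{(i,k)} = c_i a_k c_i satisfies lim_{(i,k)} x_{(i,k)} a = a and lim_{(i,k)} a x_{(i,k)} = a; in particular A₀ is a closed subalgebra of A with a two-sided approximate identity. -/
import Mathlib


open Filter Topology

/-- The norm-closed linear span of a set of operators. -/
noncomputable def clspan {H K : Type*} [NormedAddCommGroup H] [InnerProductSpace ℂ H]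
    [NormedAddCommGroup K] [InnerProductSpace ℂ K] (S : Set (H →L[ℂ] K)) : Set (H →L[ℂ] K) :=
  closure ((Submodule.span ℂ S : Submodule ℂ (H →L[ℂ] K)) : Set (H →L[ℂ] K))

/-- Auxiliary: a uniformly contractive net of operators that converges pointwise to the
identity on a set `S` also converges on the closed linear span of `S`. -/
lemma aux_tendsto_clspan {E : Type*} [NormedAddCommGroup E] [NormedSpace ℂ E]
    {P : Type*} [Preorder P] (T : P → E →L[ℂ] E) (hT : ∀ p, ‖T p‖ ≤ 1)
    (S : Set E) (hS : ∀ x ∈ S, Tendsto (fun p => T p x) atTop (𝓝 x))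
    {x : E} (hx : x ∈ closure ((Submodule.span ℂ S : Submodule ℂ E) : Set E)) :
    Tendsto (fun p => T p x) atTop (𝓝 x) := by
  set M : Set E := {x | Tendsto (fun p => T p x) atTop (𝓝 x)} with hM
  have hsub : ((Submodule.span ℂ S : Submodule ℂ E) : Set E) ⊆ M := by
    intro x hx
    induction hx using Submodule.span_induction with
    | mem y hy => exact hS y hy
    | zero =>
      show Tendsto (fun p => T p (0 : E)) atTop (𝓝 (0 : E))
      simpa using (tendsto_const_nhds : Tendsto (fun _ : P => (0 : E)) atTop (𝓝 0))
    | add y z _ _ hy hz =>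
      have hy' : Tendsto (fun p => T p y) atTop (𝓝 y) := hy
      have hz' : Tendsto (fun p => T p z) atTop (𝓝 z) := hz
      show Tendsto (fun p => T p (y + z)) atTop (𝓝 (y + z))
      simpa using hy'.add hz'
    | smul r y _ hy =>
      have hy' : Tendsto (fun p => T p y) atTop (𝓝 y) := hy
      show Tendsto (fun p => T p (r • y)) atTop (𝓝 (r • y))
      simpa using hy'.const_smul r
  have hxM : x ∈ closure M := closure_mono hsub hx
  rw [Metric.tendsto_nhds]
  intro ε hε
  obtain ⟨y, hyM, hy⟩ := Metric.mem_closure_iff.mp hxM (ε / 3) (by linarith)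
  have hyT : Tendsto (fun p => T p y) atTop (𝓝 y) := hyM
  filter_upwards [Metric.tendsto_nhds.mp hyT (ε / 3) (by linarith)] with p hp
  have h1 : ‖T p x - T p y‖ ≤ ‖x - y‖ := by
    calc ‖T p x - T p y‖ = ‖T p (x - y)‖ := by rw [map_sub]
    _ ≤ ‖T p‖ * ‖x - y‖ := (T p).le_opNorm _
    _ ≤ 1 * ‖x - y‖ := by gcongr; exact hT p
    _ = ‖x - y‖ := one_mul _
  have : dist (T p x) x ≤ ‖x - y‖ + dist (T p y) y + ‖y - x‖ := by
    rw [dist_eq_norm, dist_eq_norm] at *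
    calc ‖T p x - x‖ = ‖(T p x - T p y) + (T p y - y) + (y - x)‖ := by abel_nf
    _ ≤ ‖(T p x - T p y) + (T p y - y)‖ + ‖y - x‖ := norm_add_le _ _
    _ ≤ ‖T p x - T p y‖ + ‖T p y - y‖ + ‖y - x‖ := by
        gcongr; exact norm_add_le _ _
    _ ≤ ‖x - y‖ + ‖T p y - y‖ + ‖y - x‖ := by gcongr
  have hxy : ‖x - y‖ < ε / 3 := by rw [← dist_eq_norm]; exact hy
  have hyx : ‖y - x‖ < ε / 3 := by rw [← dist_eq_norm, dist_comm]; exact hy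
  linarith

set_option maxHeartbeats 1000000 in
/-- If `A` is a norm-closed subalgebra of `B(H)` with a two-sided contractive
approximate identity `(a k)`, `C` is a C*-subalgebra of `B(H)` with contractive approximate
identity `(c i)`, `C A ⊆ A` and `A C ⊆ A`, then for each `x` in `A₀ := clspan (C A C)`
the net `c_i a_k c_i` is a two-sided approximate identity, and `A₀` is closed under
multiplication. -/
theorem stmt_0 {H : Type*} [NormedAddCommGroup H] [InnerProductSpace ℂ H] [CompleteSpace H]
    (A C : Submodule ℂ (H →L[ℂ] H))
    (hAc : IsClosed (A : Set (H →L[ℂ] H))) (hCc : IsClosed (C : Set (H →L[ℂ] H)))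
    (hAm : ∀ x ∈ A, ∀ y ∈ A, x ∘L y ∈ A)
    (hCm : ∀ x ∈ C, ∀ y ∈ C, x ∘L y ∈ C)
    (hCstar : ∀ x ∈ C, ContinuousLinearMap.adjoint x ∈ C)
    (hCA : ∀ c' ∈ C, ∀ a' ∈ A, c' ∘L a' ∈ A)
    (hAC : ∀ a' ∈ A, ∀ c' ∈ C, a' ∘L c' ∈ A)
    {ι κ : Type*} [Preorder ι] [IsDirected ι (· ≤ ·)] [Nonempty ι]
    [Preorder κ] [IsDirected κ (· ≤ ·)] [Nonempty κ]
    (c : ι → (H →L[ℂ] H)) (hc : ∀ i, c i ∈ C) (hcn : ∀ i, ‖c i‖ ≤ 1)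
    (hcL : ∀ x ∈ C, Tendsto (fun i => c i ∘L x) atTop (𝓝 x))
    (hcR : ∀ x ∈ C, Tendsto (fun i => x ∘L c i) atTop (𝓝 x))
    (a : κ → (H →L[ℂ] H)) (ha : ∀ k, a k ∈ A) (han : ∀ k, ‖a k‖ ≤ 1)
    (haL : ∀ x ∈ A, Tendsto (fun k => a k ∘L x) atTop (𝓝 x))
    (haR : ∀ x ∈ A, Tendsto (fun k => x ∘L a k) atTop (𝓝 x))
    (A₀ : Set (H →L[ℂ] H))
    (hA₀ : A₀ = clspan {x : H →L[ℂ] H |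
      ∃ c' ∈ C, ∃ a' ∈ A, ∃ c'' ∈ C, x = c' ∘L a' ∘L c''}) :
    A₀ ⊆ (A : Set (H →L[ℂ] H)) ∧ IsClosed A₀ ∧
    (∀ x ∈ A₀, ∀ y ∈ A₀, x ∘L y ∈ A₀) ∧
    (∀ x ∈ A₀,
      Tendsto (fun p : ι × κ => (c p.1 ∘L a p.2 ∘L c p.1) ∘L x) atTop (𝓝 x) ∧
      Tendsto (fun p : ι × κ => x ∘L (c p.1 ∘L a p.2 ∘L c p.1)) atTop (𝓝 x)) := by
  subst hA₀
  set S : Set (H →L[ℂ] H) :=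
    {x : H →L[ℂ] H | ∃ c' ∈ C, ∃ a' ∈ A, ∃ c'' ∈ C, x = c' ∘L a' ∘L c''} with hSdef
  have hSA : S ⊆ (A : Set (H →L[ℂ] H)) := by
    rintro x ⟨c₁, hc₁, a₁, ha₁, c₂, hc₂, rfl⟩
    exact hCA _ hc₁ _ (hAC _ ha₁ _ hc₂)
  have hspanA : ((Submodule.span ℂ S : Submodule ℂ (H →L[ℂ] H)) : Set (H →L[ℂ] H))
      ⊆ (A : Set (H →L[ℂ] H)) := Submodule.span_le.mpr hSA
  have hclA : clspan S ⊆ (A : Set (H →L[ℂ] H)) := closure_minimal hspanA hAc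
  have hclosed : IsClosed (clspan S) := isClosed_closure
  -- multiplicativity on generators
  have hSmul : ∀ x ∈ S, ∀ y ∈ S, x ∘L y ∈ S := by
    rintro _ ⟨c₁, hc₁, a₁, ha₁, c₂, hc₂, rfl⟩ _ ⟨c₃, hc₃, a₂, ha₂, c₄, hc₄, rfl⟩
    refine ⟨c₁, hc₁, (a₁ ∘L c₂) ∘L (c₃ ∘L a₂), ?_, c₄, hc₄, ?_⟩
    · exact hAm _ (hAC _ ha₁ _ hc₂) _ (hCA _ hc₃ _ ha₂)
    · rfl
  -- multiplicativity on the span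
  have hspanmul : ∀ x ∈ Submodule.span ℂ S, ∀ y ∈ Submodule.span ℂ S,
      x ∘L y ∈ Submodule.span ℂ S := by
    intro x hx
    induction hx using Submodule.span_induction with
    | mem u hu =>
      intro y hy
      induction hy using Submodule.span_induction with
      | mem v hv => exact Submodule.subset_span (hSmul u hu v hv)
      | zero => simpa [ContinuousLinearMap.comp_zero] using
          Submodule.zero_mem (Submodule.span ℂ S)
      | add v w _ _ hv hw =>
          simpa [ContinuousLinearMap.comp_add] using Submodule.add_mem _ hv hw
      | smul r v _ hv =>
          simpa [ContinuousLinearMap.comp_smul] using Submodule.smul_mem _ r hv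
    | zero =>
      intro y hy
      simpa [ContinuousLinearMap.zero_comp] using Submodule.zero_mem (Submodule.span ℂ S)
    | add u w _ _ hu hw =>
      intro y hy
      simpa [ContinuousLinearMap.add_comp] using Submodule.add_mem _ (hu y hy) (hw y hy)
    | smul r u _ hu =>
      intro y hy
      simpa [ContinuousLinearMap.smul_comp] using Submodule.smul_mem _ r (hu y hy)
  -- multiplicativity on the closed span
  have hmul : ∀ x ∈ clspan S, ∀ y ∈ clspan S, x ∘L y ∈ clspan S := by
    have contL : ∀ u : H →L[ℂ] H, Continuous fun v : H →L[ℂ] H => u ∘L v := by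
      intro u
      simpa [ContinuousLinearMap.mul_def] using (continuous_mul_left u)
    have contR : ∀ u : H →L[ℂ] H, Continuous fun v : H →L[ℂ] H => v ∘L u := by
      intro u
      simpa [ContinuousLinearMap.mul_def] using (continuous_mul_right u)
    intro x hx y hy
    have step1 : ∀ u ∈ ((Submodule.span ℂ S : Submodule ℂ (H →L[ℂ] H)) :
        Set (H →L[ℂ] H)), x ∘L u ∈ clspan S := by
      intro u hu
      exact map_mem_closure (f := fun v : H →L[ℂ] H => v ∘L u) (contR u) hx
        (fun v hv => hspanmul v hv u hu)
    have h2 : x ∘L y ∈ closure (clspan S) :=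
      map_mem_closure (f := fun v : H →L[ℂ] H => x ∘L v) (contL x) hy step1
    rw [show clspan S = closure ((Submodule.span ℂ S : Submodule ℂ (H →L[ℂ] H)) :
      Set (H →L[ℂ] H)) from rfl, closure_closure] at h2
    exact h2
  refine ⟨hclA, hclosed, hmul, ?_⟩
  -- the approximate identity
  set d : ι × κ → (H →L[ℂ] H) := fun p => c p.1 ∘L a p.2 ∘L c p.1 with hd
  have hdn : ∀ p : ι × κ, ‖d p‖ ≤ 1 := by
    intro p
    have h2 : ‖a p.2 ∘L c p.1‖ ≤ 1 := by
      calc ‖a p.2 ∘L c p.1‖ ≤ ‖a p.2‖ * ‖c p.1‖ := ContinuousLinearMap.opNorm_comp_le _ _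
        _ ≤ 1 * 1 := mul_le_mul (han p.2) (hcn p.1) (norm_nonneg _) zero_le_one
        _ = 1 := one_mul 1
    calc ‖c p.1 ∘L a p.2 ∘L c p.1‖ ≤ ‖c p.1‖ * ‖a p.2 ∘L c p.1‖ :=
          ContinuousLinearMap.opNorm_comp_le _ _
      _ ≤ 1 * 1 := mul_le_mul (hcn p.1) h2 (norm_nonneg _) zero_le_one
      _ = 1 := one_mul 1
  have hfst : Tendsto (Prod.fst : ι × κ → ι) atTop atTop := by
    rw [← prod_atTop_atTop_eq]; exact tendsto_fst
  have hsnd : Tendsto (Prod.snd : ι × κ → κ) atTop atTop := by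
    rw [← prod_atTop_atTop_eq]; exact tendsto_snd
  -- convergence on generators, left version
  have genL : ∀ z ∈ S, Tendsto (fun p : ι × κ => d p ∘L z) atTop (𝓝 z) := by
    rintro z hzS
    obtain ⟨c₁, hc₁, a₁, ha₁, c₂, hc₂, hz⟩ := hzS
    have hzA : z ∈ A := hSA (by exact ⟨c₁, hc₁, a₁, ha₁, c₂, hc₂, hz⟩)
    have hcz : Tendsto (fun i => c i ∘L z) atTop (𝓝 z) := by
      have h1 := hcL c₁ hc₁
      have cont : Continuous fun u : H →L[ℂ] H => u ∘L (a₁ ∘L c₂) := by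
        simpa [ContinuousLinearMap.mul_def] using (continuous_mul_right (a₁ ∘L c₂))
      have h2 := (cont.tendsto c₁).comp h1
      subst hz
      exact h2
    have hak : Tendsto (fun k => a k ∘L z) atTop (𝓝 z) := haL z hzA
    rw [tendsto_iff_norm_sub_tendsto_zero]
    have key : ∀ p : ι × κ,
        ‖d p ∘L z - z‖ ≤ ‖a p.2 ∘L z - z‖ + 4 * ‖c p.1 ∘L z - z‖ := by
      intro p
      simp only [hd, ← ContinuousLinearMap.mul_def]
      set ci := c p.1 with hci
      set ak := a p.2 with hak2
      have e1 : ci * (ak * ci) * z - z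
          = ci * (ak * (ci * z) - ci * z) + ci * (ci * z - z) + (ci * z - z) := by
        noncomm_ring
      have e2 : ak * (ci * z) - ci * z
          = ak * (ci * z - z) + (ak * z - z) + (z - ci * z) := by
        noncomm_ring
      have mci : ∀ u : H →L[ℂ] H, ‖ci * u‖ ≤ ‖u‖ := fun u =>
        (norm_mul_le _ _).trans (mul_le_of_le_one_left (norm_nonneg _) (hcn p.1))
      have mak : ∀ u : H →L[ℂ] H, ‖ak * u‖ ≤ ‖u‖ := fun u =>
        (norm_mul_le _ _).trans (mul_le_of_le_one_left (norm_nonneg _) (han p.2))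
      have hrev : ‖z - ci * z‖ = ‖ci * z - z‖ := norm_sub_rev _ _
      have b2 : ‖ak * (ci * z) - ci * z‖ ≤ ‖ak * z - z‖ + 2 * ‖ci * z - z‖ := by
        rw [e2]
        have h3 := norm_add₃_le (a := ak * (ci * z - z)) (b := ak * z - z) (c := z - ci * z)
        have h4 := mak (ci * z - z)
        linarith
      rw [e1]
      have h5 := norm_add₃_le (a := ci * (ak * (ci * z) - ci * z))
        (b := ci * (ci * z - z)) (c := ci * z - z)
      have h6 := mci (ak * (ci * z) - ci * z)
      have h7 := mci (ci * z - z)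
      linarith
    have t1 : Tendsto (fun p : ι × κ => ‖a p.2 ∘L z - z‖) atTop (𝓝 0) :=
      (tendsto_iff_norm_sub_tendsto_zero.mp hak).comp hsnd
    have t2 : Tendsto (fun p : ι × κ => ‖c p.1 ∘L z - z‖) atTop (𝓝 0) :=
      (tendsto_iff_norm_sub_tendsto_zero.mp hcz).comp hfst
    have t3 : Tendsto (fun p : ι × κ => ‖a p.2 ∘L z - z‖ + 4 * ‖c p.1 ∘L z - z‖)
        atTop (𝓝 0) := by
      simpa using t1.add (t2.const_mul 4)
    exact squeeze_zero (fun p => norm_nonneg _) key t3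
  -- convergence on generators, right version
  have genR : ∀ z ∈ S, Tendsto (fun p : ι × κ => z ∘L d p) atTop (𝓝 z) := by
    rintro z hzS
    obtain ⟨c₁, hc₁, a₁, ha₁, c₂, hc₂, hz⟩ := hzS
    have hzA : z ∈ A := hSA (by exact ⟨c₁, hc₁, a₁, ha₁, c₂, hc₂, hz⟩)
    have hcz : Tendsto (fun i => z ∘L c i) atTop (𝓝 z) := by
      have h1 := hcR c₂ hc₂
      have cont : Continuous fun u : H →L[ℂ] H => (c₁ ∘L a₁) ∘L u := by
        simpa [ContinuousLinearMap.mul_def] using (continuous_mul_left (c₁ ∘L a₁))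
      have h2 := (cont.tendsto c₂).comp h1
      subst hz
      exact h2
    have hak : Tendsto (fun k => z ∘L a k) atTop (𝓝 z) := haR z hzA
    rw [tendsto_iff_norm_sub_tendsto_zero]
    have key : ∀ p : ι × κ,
        ‖z ∘L d p - z‖ ≤ ‖z ∘L a p.2 - z‖ + 4 * ‖z ∘L c p.1 - z‖ := by
      intro p
      simp only [hd, ← ContinuousLinearMap.mul_def]
      set ci := c p.1 with hci
      set ak := a p.2 with hak2
      have e1 : z * (ci * (ak * ci)) - z
          = ((z * ci) * ak - z * ci) * ci + ((z * ci) - z) * ci + (z * ci - z) := by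
        noncomm_ring
      have e2 : (z * ci) * ak - z * ci
          = (z * ci - z) * ak + (z * ak - z) + (z - z * ci) := by
        noncomm_ring
      have mci : ∀ u : H →L[ℂ] H, ‖u * ci‖ ≤ ‖u‖ := fun u =>
        (norm_mul_le _ _).trans (mul_le_of_le_one_right (norm_nonneg _) (hcn p.1))
      have mak : ∀ u : H →L[ℂ] H, ‖u * ak‖ ≤ ‖u‖ := fun u =>
        (norm_mul_le _ _).trans (mul_le_of_le_one_right (norm_nonneg _) (han p.2))
      have hrev : ‖z - z * ci‖ = ‖z * ci - z‖ := norm_sub_rev _ _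
      have b2 : ‖(z * ci) * ak - z * ci‖ ≤ ‖z * ak - z‖ + 2 * ‖z * ci - z‖ := by
        rw [e2]
        have h3 := norm_add₃_le (a := (z * ci - z) * ak) (b := z * ak - z) (c := z - z * ci)
        have h4 := mak (z * ci - z)
        linarith
      rw [e1]
      have h5 := norm_add₃_le (a := ((z * ci) * ak - z * ci) * ci)
        (b := ((z * ci) - z) * ci) (c := z * ci - z)
      have h6 := mci ((z * ci) * ak - z * ci)
      have h7 := mci ((z * ci) - z)
      linarith
    have t1 : Tendsto (fun p : ι × κ => ‖z ∘L a p.2 - z‖) atTop (𝓝 0) :=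
      (tendsto_iff_norm_sub_tendsto_zero.mp hak).comp hsnd
    have t2 : Tendsto (fun p : ι × κ => ‖z ∘L c p.1 - z‖) atTop (𝓝 0) :=
      (tendsto_iff_norm_sub_tendsto_zero.mp hcz).comp hfst
    have t3 : Tendsto (fun p : ι × κ => ‖z ∘L a p.2 - z‖ + 4 * ‖z ∘L c p.1 - z‖)
        atTop (𝓝 0) := by
      simpa using t1.add (t2.const_mul 4)
    exact squeeze_zero (fun p => norm_nonneg _) key t3
  -- extend to the closed span via the auxiliary lemma
  intro x hx
  constructor
  · have := aux_tendsto_clspan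
      (fun p : ι × κ => ContinuousLinearMap.mul ℂ (H →L[ℂ] H) (d p))
      (fun p => (ContinuousLinearMap.opNorm_mul_apply_le ℂ _ (d p)).trans (hdn p))
      S (fun z hz => by
        simpa [ContinuousLinearMap.mul_apply', ContinuousLinearMap.mul_def]
          using genL z hz)
      hx
    simpa [ContinuousLinearMap.mul_apply', ContinuousLinearMap.mul_def] using this
  · have hTn : ∀ p : ι × κ,
        ‖(ContinuousLinearMap.mul ℂ (H →L[ℂ] H)).flip (d p)‖ ≤ 1 := by
      intro p
      refine ContinuousLinearMap.opNorm_le_bound _ zero_le_one (fun u => ?_)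
      calc ‖(ContinuousLinearMap.mul ℂ (H →L[ℂ] H)).flip (d p) u‖
          = ‖u * d p‖ := rfl
        _ ≤ ‖u‖ * ‖d p‖ := norm_mul_le _ _
        _ ≤ ‖u‖ * 1 := by gcongr; exact hdn p
        _ = 1 * ‖u‖ := by ring
    have := aux_tendsto_clspan
      (fun p : ι × κ => (ContinuousLinearMap.mul ℂ (H →L[ℂ] H)).flip (d p))
      hTn
      S (fun z hz => by
        simpa [ContinuousLinearMap.flip_apply, ContinuousLinearMap.mul_apply',
          ContinuousLinearMap.mul_def] using genR z hz)
      hx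
    simpa [ContinuousLinearMap.flip_apply, ContinuousLinearMap.mul_apply',
      ContinuousLinearMap.mul_def] using this
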